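/- For β > 1 the energy E*_β = ∫ (1/2)|x|^β μ_β(dx) + (1-β)/2 equals ((β-1)/2)(β(2/β)^{(2β-1)/(β-1)}/(4β-2) - 1), where μ_β is the probability measure with density (β(β-1)/4)|x|^{β-2} on [-(2/β)^{1/(β-1)}, (2/β)^{1/(β-1)}]. -/

import Mathlib

open Real MeasureTheory

/-- For `β > 1`, the energy `E*_β = ∫ (1/2)|x|^β dμ_β + (1-β)/2` of the equilibrium measure
`μ_β` with density `(β(β-1)/4)|x|^{β-2}` on `[-(2/β)^{1/(β-1)}, (2/β)^{1/(β-1)}]` equals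
`((β-1)/2)(β(2/β)^{(2β-1)/(β-1)}/(4β-2) - 1)`. -/
theorem energy_power_potential_linear_kernel (β : ℝ) (hβ : 1 < β) :
    let R : ℝ := (2 / β) ^ ((1:ℝ) / (β - 1))
    let μ : Measure ℝ := volume.withDensity fun x =>
      ENNReal.ofReal (if x ∈ Set.Icc (-R) R then β * (β - 1) / 4 * |x| ^ (β - 2) else 0)
    (∫ x, (1 / 2) * |x| ^ β ∂μ) + (1 - β) / 2
      = ((β - 1) / 2) * (β * (2 / β) ^ ((2 * β - 1) / (β - 1)) / (4 * β - 2) - 1) := by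
  intro R μ
  have hβ0 : 0 < β := lt_trans one_pos hβ
  have hb1 : β - 1 ≠ 0 := by linarith
  have h2b1 : (2*β - 1) ≠ 0 := by linarith
  have hR : 0 < R := rpow_pos_of_pos (by positivity) _
  set d : ℝ → ℝ := fun x => if x ∈ Set.Icc (-R) R then β * (β - 1) / 4 * |x| ^ (β - 2) else 0 with hd
  have hd0 : ∀ x, 0 ≤ d x := by
    intro x; simp only [hd]; split_ifs
    · exact mul_nonneg (by nlinarith) (rpow_nonneg (abs_nonneg x) _)
    · exact le_refl 0
  have hdm : Measurable d := by
    apply Measurable.ite measurableSet_Icc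
    · exact (measurable_const.mul ((measurable_abs).pow_const _))
    · exact measurable_const
  have key : (∫ x, (1 / 2) * |x| ^ β ∂μ)
      = ∫ x, d x * ((1/2) * |x| ^ β) := by
    have : μ = volume.withDensity (fun x => ((d x).toNNReal : ENNReal)) := by
      rfl
    rw [this, integral_withDensity_eq_integral_smul (hdm.real_toNNReal)]
    congr 1; ext x
    rw [NNReal.smul_def, Real.coe_toNNReal _ (hd0 x), smul_eq_mul]
  have hcond : ∀ x : ℝ, (|x| ∈ Set.Icc (-R) R) ↔ (x ∈ Set.Icc (-R) R) := by
    intro x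
    simp only [Set.mem_Icc]
    constructor
    · rintro ⟨-, h2⟩; exact abs_le.mp h2
    · intro h
      exact ⟨le_trans (by linarith) (abs_nonneg x), abs_le.mpr h⟩
  have step2 : (∫ x, d x * ((1/2) * |x| ^ β))
      = 2 * ∫ x in Set.Ioi (0:ℝ), d x * ((1/2) * |x| ^ β) := by
    rw [← integral_comp_abs (f := fun y => d y * ((1/2) * |y| ^ β))]
    congr 1; ext x
    simp only [hd, abs_abs, hcond x]
  have step3 : (∫ x in Set.Ioi (0:ℝ), d x * ((1/2) * |x| ^ β))
      = ∫ x in Set.Ioc (0:ℝ) R, β * (β - 1) / 8 * x ^ (2*β - 2) := by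
    have h1 : (∫ x in Set.Ioi (0:ℝ), d x * ((1/2) * |x| ^ β))
        = ∫ x in Set.Ioi (0:ℝ),
            Set.indicator (Set.Icc (-R) R)
              (fun x => β * (β - 1) / 4 * |x| ^ (β - 2) * ((1/2) * |x| ^ β)) x := by
      congr 1; ext x
      by_cases hx : x ∈ Set.Icc (-R) R
      · rw [Set.indicator_of_mem hx]; simp only [hd]; rw [if_pos hx]
      · rw [Set.indicator_of_notMem hx]; simp only [hd]; rw [if_neg hx, zero_mul]
    rw [h1, setIntegral_indicator measurableSet_Icc]
    have h2 : Set.Ioi (0:ℝ) ∩ Set.Icc (-R) R = Set.Ioc (0:ℝ) R := by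
      ext x
      simp only [Set.mem_inter_iff, Set.mem_Ioi, Set.mem_Icc, Set.mem_Ioc]
      constructor
      · rintro ⟨h1', -, h3'⟩; exact ⟨h1', h3'⟩
      · rintro ⟨h1', h2'⟩; exact ⟨h1', le_trans (by linarith) (le_of_lt h1'), h2'⟩
    rw [h2]
    apply setIntegral_congr_fun measurableSet_Ioc
    intro x hx
    have hx0 : 0 < x := hx.1
    dsimp only
    rw [abs_of_pos hx0]
    rw [show (2*β - 2 : ℝ) = (β - 2) + β by ring, rpow_add hx0]
    ring
  have step4 : (∫ x in Set.Ioc (0:ℝ) R, β * (β - 1) / 8 * x ^ (2*β - 2))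
      = β * (β - 1) / 8 * (R ^ (2*β - 1) / (2*β - 1)) := by
    rw [← intervalIntegral.integral_of_le (le_of_lt hR), intervalIntegral.integral_const_mul,
      integral_rpow (Or.inl (by linarith))]
    rw [show (2*β - 2 + 1 : ℝ) = 2*β - 1 by ring, zero_rpow h2b1]
    ring
  have hRpow : R ^ (2*β - 1) = (2 / β) ^ ((2 * β - 1) / (β - 1)) := by
    rw [show ((2 * β - 1) / (β - 1) : ℝ) = (1/(β-1)) * (2*β-1) by ring,
      rpow_mul (by positivity)]
  rw [key, step2, step3, step4, hRpow]
  have h4b2 : (4*β - 2 : ℝ) ≠ 0 := by linarith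
  generalize (2 / β : ℝ) ^ ((2 * β - 1) / (β - 1)) = P
  rw [show (4*β - 2 : ℝ) = 2 * (2*β - 1) by ring]
  field_simp
  ring
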